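/- In the n-dimensional Hamming graph G = □_{i=1}^n K_k, for 1 ≤ ℓ ≤ ⌊n/2⌋ and any sequentially spanning sequence (v_0,…,v_{ℓ−1}) of length ℓ−1, the number C_ℓ of vertices w ∈ V(G) such that (v_0,…,v_{ℓ−1},w) is a sequentially spanning sequence of length ℓ equals C(n−2ℓ+2, 2) · (k−1)² · k^{2ℓ−2} (independently of the chosen sequence), and consequently for 0 ≤ ℓ ≤ ⌊n/2⌋ the number of sequentially spanning sequences of length ℓ is |S_ℓ| = k^n · Π_{j=1}^{ℓ} C_j = (n! / (n−2ℓ)!) · (k−1)^{2ℓ} · 2^{−ℓ} · k^{n+ℓ²−ℓ}, where C(a,b) denotes the binomial coefficient. -/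

import Mathlib

open scoped Classical

section Defs

variable {V : Type*}

/-- One round of 2-neighbour bootstrap percolation: a healthy vertex becomes infected
if it has at least two infected neighbours. -/
def bootStep (G : SimpleGraph V) (A : Set V) : Set V :=
  A ∪ {v | ∃ u w, u ≠ w ∧ G.Adj v u ∧ G.Adj v w ∧ u ∈ A ∧ w ∈ A}

/-- Iterates of the bootstrap process. -/
def bootIter (G : SimpleGraph V) (A : Set V) : ℕ → Set V
  | 0 => A
  | j + 1 => bootStep G (bootIter G A j)

/-- The 2-neighbour bootstrap closure `[A]` of a set `A` of initially infected vertices. -/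
def bootClosure (G : SimpleGraph V) (A : Set V) : Set V :=
  ⋃ j, bootIter G A j

/-- Graph distance between two sets of vertices. -/
noncomputable def setDist (G : SimpleGraph V) (X Y : Set V) : ℕ :=
  sInf {d | ∃ u ∈ X, ∃ v ∈ Y, G.dist u v = d}

/-- A sequence of `m` vertices `v 0, …, v (m-1)` (a "sequentially spanning sequence of
length `m-1`") is sequentially spanning if each vertex lies at distance exactly two from the
bootstrap closure of its predecessors. -/
def SeqSpanSeq (G : SimpleGraph V) (m : ℕ) (v : Fin m → V) : Prop :=
  ∀ i : Fin m, 0 < (i : ℕ) →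
    setDist G (bootClosure G (v '' {j | (j : ℕ) < (i : ℕ)})) {v i} = 2

/-- A set `U` is sequentially spanning if its vertices admit an ordering which is a
sequentially spanning sequence. -/
def SeqSpanSet (G : SimpleGraph V) (U : Set V) : Prop :=
  ∃ (m : ℕ) (v : Fin (m + 1) → V), Function.Injective v ∧ Set.range v = U ∧
    SeqSpanSeq G (m + 1) v

/-- A family `F` of vertex sets is disjointly internally spanned by `A` if there are
pairwise disjoint subsets of `A` internally spanning each member of `F`. -/
def DisjIntSpanned (G : SimpleGraph V) (A : Set V) (F : Set (Set V)) : Prop :=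
  ∃ B : Set V → Set V,
    (∀ U ∈ F, B U ⊆ A ∧ bootClosure G (B U ∩ U) = U) ∧
    (∀ U ∈ F, ∀ W ∈ F, U ≠ W → Disjoint (B U) (B W))

/-- The probability that the `p`-random subset of a finite vertex set satisfies the event `E`. -/
noncomputable def probEvent [Fintype V] [DecidableEq V] (p : ℝ) (E : Set V → Prop) : ℝ :=
  ∑ A : Finset V, if E ↑A then p ^ A.card * (1 - p) ^ (Fintype.card V - A.card) else 0

end Defs

/-- The `n`-dimensional Hamming graph on `[k]^n`: two vertices are adjacent iff they
differ in exactly one coordinate. -/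
def hamming (n k : ℕ) : SimpleGraph (Fin n → Fin k) where
  Adj v w := (Finset.univ.filter fun i => v i ≠ w i).card = 1
  symm := by
    constructor
    intro v w h
    have e : (Finset.univ.filter fun i => w i ≠ v i) =
        Finset.univ.filter fun i => v i ≠ w i :=
      Finset.filter_congr fun i _ => ne_comm
    rw [e]; exact h
  loopless := by
    constructor
    intro v h
    simp at h

/-- The vertex set of the projection of the Hamming graph specified by `S`:
coordinates with `S i = some a` are fixed to `a`, coordinates with `S i = none` are free. -/
def projSet {n k : ℕ} (S : Fin n → Option (Fin k)) : Set (Fin n → Fin k) :=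
  {v | ∀ i : Fin n, ∀ a : Fin k, S i = some a → v i = a}

/-- The dimension of a projection: the number of free coordinates. -/
def projDim {n k : ℕ} (S : Fin n → Option (Fin k)) : ℕ :=
  (Finset.univ.filter fun i => S i = none).card

/-- Probability that the Hamming graph percolates from the `p`-random subset. -/
noncomputable def percProb (n k : ℕ) (p : ℝ) : ℝ :=
  probEvent p (fun A => bootClosure (hamming n k) A = Set.univ)

/-- Probability that the projection `S` is internally spanned by the `p`-random subset. -/
noncomputable def intSpanProb (n k : ℕ) (p : ℝ) (S : Fin n → Option (Fin k)) : ℝ :=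
  probEvent p (fun A => bootClosure (hamming n k) (A ∩ projSet S) = projSet S)

/-- `p_* = n^{-2} k^{-2√n + 1}`. -/
noncomputable def pStar (n k : ℕ) : ℝ :=
  (n : ℝ) ^ (-2 : ℝ) * (k : ℝ) ^ (-2 * Real.sqrt n + 1)

/-- The critical probability for 2-neighbour bootstrap percolation on the Hamming graph. -/
noncomputable def pc (n k : ℕ) : ℝ :=
  sInf {p : ℝ | 0 < p ∧ p < 1 ∧ 1 / 2 ≤ percProb n k p}

/-- A canonical projection of dimension `m` (the first `m` coordinates are free,
the remaining ones are fixed to `x`). -/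
def canonProj (n k m : ℕ) (x : Fin k) : Fin n → Option (Fin k) :=
  fun i => if (i : ℕ) < m then none else some x

/-- The set `I_{H,t}` of admissible indices `(ℓ, i, j, d)` for a projection of dimension `m`
and threshold `t`. -/
def indexSet (m t : ℕ) : Finset (ℕ × ℕ × ℕ × ℕ) :=
  ((Finset.range (m + 1)) ×ˢ (Finset.range (m + 1)) ×ˢ (Finset.range (m + 1)) ×ˢ
      (Finset.range 3)).filter
    fun q => t ≤ q.1 ∧ q.1 ≤ min (q.2.1 + q.2.2.1 + q.2.2.2) m ∧
      q.2.2.1 ≤ q.2.1 ∧ q.2.1 < t ∧ q.2.1 + q.2.2.2 < q.1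

/-- `U_{H,t}(ℓ,i,j,d)`: the number of candidate quadruples `(H_ℓ, {H_i, H_j}, d)` inside the
projection `SH` at threshold `t` with dimensions `ℓ, i, j` and distance `d`; the pair
`{H_i, H_j}` is unordered. -/
noncomputable def candCountIn (n k : ℕ) (SH : Fin n → Option (Fin k)) (t : ℕ)
    (q : ℕ × ℕ × ℕ × ℕ) : ℕ :=
  Nat.card {c : (Fin n → Option (Fin k)) × Sym2 (Fin n → Option (Fin k)) //
    t ≤ q.1 ∧ q.2.2.1 ≤ q.2.1 ∧ q.2.1 < t ∧ q.2.2.2 ≤ 2 ∧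
    projDim c.1 = q.1 ∧ projSet c.1 ⊆ projSet SH ∧
    ∃ a b, c.2 = s(a, b) ∧ projDim a = q.2.1 ∧ projDim b = q.2.2.1 ∧
      setDist (hamming n k) (projSet a) (projSet b) = q.2.2.2 ∧
      bootClosure (hamming n k) (projSet a ∪ projSet b) = projSet c.1}

/-- `U_{G,t}(ℓ,i,j,d)`: the number of candidate quadruples in the whole Hamming graph. -/
noncomputable def candCount (n k t : ℕ) (q : ℕ × ℕ × ℕ × ℕ) : ℕ :=
  candCountIn n k (fun _ => none) t q

/-- The constants `Ψ_m`. -/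
noncomputable def Psi (n k : ℕ) : ℕ → ℝ
  | 0 => 1
  | m + 1 =>
    if m + 1 ≤ 14 then (1 / 2) * (9 * Real.sqrt 2 / 10) ^ (m + 1)
    else Psi n k m * (1 + (k : ℝ) ^ (-(((m : ℝ) + 1) - 11) / 2)) * (1 + 4 / (n : ℝ))

/-- The function `Φ(m) = Ψ_m p^{m/2+1} m! 2^{-m/2} (k-1)^m k^{(m²+2m)/4}`. -/
noncomputable def Phi (n k : ℕ) (p : ℝ) (m : ℕ) : ℝ :=
  Psi n k m * p ^ ((m : ℝ) / 2 + 1) * (Nat.factorial m : ℝ) * (2 : ℝ) ^ (-(m : ℝ) / 2) *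
    ((k : ℝ) - 1) ^ m * (k : ℝ) ^ (((m : ℝ) ^ 2 + 2 * (m : ℝ)) / 4)

/-- `|S_{m-1}|`: the number of sequentially spanning sequences with `m` vertices
(i.e. of length `m - 1`) in the Hamming graph. -/
noncomputable def seqCount (n k m : ℕ) : ℕ :=
  Nat.card {v : Fin m → (Fin n → Fin k) // SeqSpanSeq (hamming n k) m v}

/-- `|P_{ℓ,i}|`: the number of unordered pairs of sequentially spanning sequences of
length `ℓ` whose vertex sets intersect in exactly `i` vertices. -/
noncomputable def pairCount (n k ℓ i : ℕ) : ℕ :=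
  Nat.card {q : Sym2 (Fin (ℓ + 1) → (Fin n → Fin k)) //
    ∃ a b, q = s(a, b) ∧ SeqSpanSeq (hamming n k) (ℓ + 1) a ∧
      SeqSpanSeq (hamming n k) (ℓ + 1) b ∧ (Set.range a ∩ Set.range b).ncard = i}


namespace SS15

variable {n k : ℕ}

/-- Hamming distance between two vertices. -/
noncomputable def Dd {n k : ℕ} (v w : Fin n → Fin k) : ℕ :=
  (Finset.univ.filter fun i => v i ≠ w i).card

lemma adj_iff {v w : Fin n → Fin k} : (hamming n k).Adj v w ↔ Dd v w = 1 := Iff.rfl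

lemma Dd_comm (v w : Fin n → Fin k) : Dd v w = Dd w v := by
  unfold Dd
  congr 1
  exact Finset.filter_congr fun i _ => ne_comm

lemma Dd_eq_zero_iff {v w : Fin n → Fin k} : Dd v w = 0 ↔ v = w := by
  unfold Dd
  rw [Finset.card_eq_zero, Finset.filter_eq_empty_iff]
  constructor
  · intro h; funext i
    by_contra hne
    exact h (Finset.mem_univ i) hne
  · intro h i _
    simp [h]

lemma Dd_triangle (u v w : Fin n → Fin k) : Dd u w ≤ Dd u v + Dd v w := by
  unfold Dd
  refine le_trans (Finset.card_le_card ?_) (Finset.card_union_le _ _)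
  intro i hi
  simp only [Finset.mem_filter, Finset.mem_union, Finset.mem_univ, true_and] at *
  by_contra hc
  push_neg at hc
  exact hi (hc.1.trans hc.2)

lemma adj_update {v : Fin n → Fin k} {i : Fin n} {c : Fin k} (h : c ≠ v i) :
    (hamming n k).Adj v (Function.update v i c) := by
  show (Finset.univ.filter fun j => v j ≠ Function.update v i c j).card = 1
  have : (Finset.univ.filter fun j => v j ≠ Function.update v i c j) = {i} := by
    ext j
    simp only [Finset.mem_filter, Finset.mem_univ, true_and, Finset.mem_singleton]
    rcases eq_or_ne j i with rfl | hj
    · simp [Function.update_self, Ne.symm h]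
    · simp [Function.update_of_ne hj, hj]
  rw [this, Finset.card_singleton]

lemma adj_exists {v w : Fin n → Fin k} (h : (hamming n k).Adj v w) :
    ∃ i c, c ≠ v i ∧ w = Function.update v i c := by
  rw [adj_iff] at h
  obtain ⟨i, hi⟩ := Finset.card_eq_one.mp h
  have hmemi : v i ≠ w i := by
    have : i ∈ (Finset.univ.filter fun j => v j ≠ w j) := hi ▸ Finset.mem_singleton_self i
    exact (Finset.mem_filter.mp this).2
  refine ⟨i, w i, Ne.symm hmemi, ?_⟩
  funext j
  rcases eq_or_ne j i with rfl | hj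
  · simp [Function.update_self]
  · rw [Function.update_of_ne hj]
    by_contra hne
    have : j ∈ ({i} : Finset (Fin n)) := hi ▸ Finset.mem_filter.mpr ⟨Finset.mem_univ j, Ne.symm hne⟩
    exact hj (Finset.mem_singleton.mp this)

lemma exists_walk (v w : Fin n → Fin k) :
    ∃ p : (hamming n k).Walk v w, p.length = Dd v w := by
  generalize hD : Dd v w = d
  induction d generalizing v with
  | zero => obtain rfl := Dd_eq_zero_iff.mp hD; exact ⟨SimpleGraph.Walk.nil, rfl⟩
  | succ d ih =>
    have hne : v ≠ w := by
      intro h; rw [h] at hD; rw [Dd_eq_zero_iff.mpr rfl] at hD; omega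
    have : ∃ i, v i ≠ w i := by
      by_contra hc; push_neg at hc; exact hne (funext hc)
    obtain ⟨i, hi⟩ := this
    set v' := Function.update v i (w i) with hv'
    have hadj : (hamming n k).Adj v v' := adj_update (Ne.symm hi)
    have hD' : Dd v' w = d := by
      have : (Finset.univ.filter fun j => v' j ≠ w j) =
          (Finset.univ.filter fun j => v j ≠ w j).erase i := by
        ext j
        simp only [Finset.mem_filter, Finset.mem_univ, true_and, Finset.mem_erase]
        rcases eq_or_ne j i with rfl | hj
        · simp [hv', Function.update_self]
        · simp [hv', Function.update_of_ne hj, hj]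
      have hicard : i ∈ (Finset.univ.filter fun j => v j ≠ w j) :=
        Finset.mem_filter.mpr ⟨Finset.mem_univ i, hi⟩
      unfold Dd
      rw [this, Finset.card_erase_of_mem hicard]
      unfold Dd at hD
      omega
    obtain ⟨p, hp⟩ := ih v' hD'
    exact ⟨SimpleGraph.Walk.cons hadj p, by simp [hp]⟩

lemma Dd_le_walk {v w : Fin n → Fin k} (p : (hamming n k).Walk v w) :
    Dd v w ≤ p.length := by
  induction p with
  | nil => simp [Dd_eq_zero_iff.mpr rfl]
  | @cons u x y h p ih =>
    calc Dd u y ≤ Dd u x + Dd x y := Dd_triangle _ _ _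
    _ ≤ 1 + p.length := by have := adj_iff.mp h; omega
    _ = (SimpleGraph.Walk.cons h p).length := by simp [SimpleGraph.Walk.length_cons]; omega

lemma dist_eq (v w : Fin n → Fin k) : (hamming n k).dist v w = Dd v w := by
  obtain ⟨p, hp⟩ := exists_walk v w
  refine le_antisymm (hp ▸ SimpleGraph.dist_le p) ?_
  obtain ⟨q, hq⟩ := SimpleGraph.Reachable.exists_walk_length_eq_dist ⟨p⟩
  exact hq ▸ Dd_le_walk q


section Closure

variable {V : Type*} (G : SimpleGraph V)

lemma subset_bootClosure (A : Set V) : A ⊆ bootClosure G A :=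
  fun x hx => Set.mem_iUnion.mpr ⟨0, hx⟩

lemma bootIter_mono (A : Set V) : ∀ {j j' : ℕ}, j ≤ j' → bootIter G A j ⊆ bootIter G A j' := by
  intro j j' h
  induction j' with
  | zero => obtain rfl : j = 0 := Nat.le_zero.mp h; exact fun x hx => hx
  | succ j' ih =>
    rcases Nat.lt_or_ge j (j'+1) with hlt | hge
    · exact fun x hx => Set.mem_union_left _ (ih (Nat.lt_succ_iff.mp hlt) hx)
    · obtain rfl : j = j' + 1 := le_antisymm h hge
      exact fun x hx => hx

lemma mem_closure_of_two {A : Set V} {x u u' : V} (hne : u ≠ u')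
    (h1 : G.Adj x u) (h2 : G.Adj x u')
    (hu : u ∈ bootClosure G A) (hu' : u' ∈ bootClosure G A) : x ∈ bootClosure G A := by
  obtain ⟨j1, hj1⟩ := Set.mem_iUnion.mp hu
  obtain ⟨j2, hj2⟩ := Set.mem_iUnion.mp hu'
  refine Set.mem_iUnion.mpr ⟨max j1 j2 + 1, Set.mem_union_right _ ?_⟩
  exact ⟨u, u', hne, h1, h2, bootIter_mono G A (le_max_left _ _) hj1,
    bootIter_mono G A (le_max_right _ _) hj2⟩

/-- A set closed under the bootstrap rule. -/
def BClosed (A : Set V) : Prop :=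
  ∀ x u u', u ≠ u' → G.Adj x u → G.Adj x u' → u ∈ A → u' ∈ A → x ∈ A

lemma bootClosure_subset {A B : Set V} (hAB : A ⊆ B) (hB : BClosed G B) :
    bootClosure G A ⊆ B := by
  intro x hx
  obtain ⟨j, hj⟩ := Set.mem_iUnion.mp hx
  clear hx
  induction j generalizing x with
  | zero => exact hAB hj
  | succ j ih =>
    rcases hj with hj | ⟨u, u', hne, h1, h2, hu, hu'⟩
    · exact ih hj
    · exact hB x u u' hne h1 h2 (ih hu) (ih hu')

lemma bootClosure_closed (A : Set V) : BClosed G (bootClosure G A) :=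
  fun _ u u' hne h1 h2 hu hu' => mem_closure_of_two G hne h1 h2 hu hu'

lemma bootClosure_mono {A B : Set V} (h : A ⊆ B) : bootClosure G A ⊆ bootClosure G B :=
  bootClosure_subset G (h.trans (subset_bootClosure G B)) (bootClosure_closed G B)

lemma bootClosure_union_closure (A B : Set V) :
    bootClosure G (bootClosure G A ∪ B) = bootClosure G (A ∪ B) := by
  apply le_antisymm
  · apply bootClosure_subset
    · apply Set.union_subset
      · exact bootClosure_mono G Set.subset_union_left
      · exact (Set.subset_union_right).trans (subset_bootClosure G _)
    · exact bootClosure_closed G _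
  · exact bootClosure_mono G (Set.union_subset_union_left B (subset_bootClosure G A))

end Closure

section Subcube

variable {n k : ℕ}

/-- Coordinates at which `w` violates a fixed coordinate of the projection `S`. -/
noncomputable def wrongs (S : Fin n → Option (Fin k)) (w : Fin n → Fin k) : Finset (Fin n) :=
  Finset.univ.filter fun i => ∃ a, S i = some a ∧ w i ≠ a

lemma mem_wrongs {S : Fin n → Option (Fin k)} {w : Fin n → Fin k} {i : Fin n} :
    i ∈ wrongs S w ↔ ∃ a, S i = some a ∧ w i ≠ a := by
  simp [wrongs]

lemma mem_projSet_iff {S : Fin n → Option (Fin k)} {w : Fin n → Fin k} :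
    w ∈ projSet S ↔ wrongs S w = ∅ := by
  rw [Finset.eq_empty_iff_forall_notMem]
  constructor
  · intro h i hi
    obtain ⟨a, ha, hna⟩ := mem_wrongs.mp hi
    exact hna (h i a ha)
  · intro h i a ha
    by_contra hna
    exact h i (mem_wrongs.mpr ⟨a, ha, hna⟩)

lemma projSet_closed (S : Fin n → Option (Fin k)) : BClosed (hamming n k) (projSet S) := by
  intro x u u' hne h1 h2 hu hu'
  by_contra hx
  have : ∃ m a, S m = some a ∧ x m ≠ a := by
    by_contra hc; push_neg at hc
    exact hx fun m a ha => hc m a ha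
  obtain ⟨m, a, hma, hxa⟩ := this
  obtain ⟨i, c, hci, rfl⟩ := adj_exists h1
  obtain ⟨i', c', hci', rfl⟩ := adj_exists h2
  have hmi : m = i := by
    by_contra hmi
    exact hxa ((Function.update_of_ne (Ne.symm (Ne.symm hmi)) c x) ▸ hu m a hma)
  have hmi' : m = i' := by
    by_contra hmi'
    exact hxa ((Function.update_of_ne (Ne.symm (Ne.symm hmi')) c' x) ▸ hu' m a hma)
  subst hmi; subst hmi'
  have hc : c = a := by have := hu m a hma; rwa [Function.update_self] at this
  have hc' : c' = a := by have := hu' m a hma; rwa [Function.update_self] at this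
  exact hne (by rw [hc, hc'])

lemma singleton_closed (x : Fin n → Fin k) : BClosed (hamming n k) ({x} : Set (Fin n → Fin k)) := by
  intro y u u' hne _ _ hu hu'
  exact absurd (hu.trans hu'.symm) hne

lemma bootClosure_singleton (x : Fin n → Fin k) :
    bootClosure (hamming n k) ({x} : Set (Fin n → Fin k)) = {x} :=
  le_antisymm (bootClosure_subset _ le_rfl (singleton_closed x)) (subset_bootClosure _ _)

lemma singleton_eq_projSet (x : Fin n → Fin k) :
    ({x} : Set (Fin n → Fin k)) = projSet (fun i => some (x i)) := by
  ext y
  constructor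
  · rintro rfl; intro i a ha; exact Option.some_inj.mp ha
  · intro h
    have : y = x := funext fun i => h i (x i) rfl
    exact this

lemma projDim_allsome (x : Fin n → Fin k) : projDim (fun i => some (x i)) = 0 := by
  simp [projDim]

lemma setDist_projSet (S : Fin n → Option (Fin k)) (w : Fin n → Fin k) :
    setDist (hamming n k) (projSet S) {w} = (wrongs S w).card := by
  classical
  set u₀ : Fin n → Fin k := fun i => (S i).getD (w i) with hu₀
  have hu₀mem : u₀ ∈ projSet S := by
    intro i a ha; simp [hu₀, ha]
  have hDu₀ : Dd u₀ w = (wrongs S w).card := by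
    unfold Dd wrongs
    congr 1
    apply Finset.filter_congr
    intro i _
    cases hS : S i with
    | none => simp [hu₀, hS]
    | some a => simp [hu₀, hS, ne_comm]
  have hmem : (wrongs S w).card ∈
      {d | ∃ u ∈ projSet S, ∃ v ∈ ({w} : Set (Fin n → Fin k)), (hamming n k).dist u v = d} :=
    ⟨u₀, hu₀mem, w, rfl, by rw [dist_eq]; exact hDu₀⟩
  refine le_antisymm (Nat.sInf_le hmem) ?_
  apply le_csInf ⟨_, hmem⟩
  rintro d ⟨u, hu, v, hv, rfl⟩
  obtain rfl : v = w := hv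
  rw [dist_eq]
  unfold Dd
  apply Finset.card_le_card
  intro i hi
  obtain ⟨a, ha, hna⟩ := mem_wrongs.mp hi
  refine Finset.mem_filter.mpr ⟨Finset.mem_univ i, ?_⟩
  rw [hu i a ha]
  exact Ne.symm hna

end Subcube

section Spread

variable {n k : ℕ}

/-- Number of free coordinates where `x` differs from `w`. -/
noncomputable def rr (S : Fin n → Option (Fin k)) (w x : Fin n → Fin k) : ℕ :=
  (Finset.univ.filter fun m => S m = none ∧ x m ≠ w m).card

/-- Secondary part of the infection-order measure. -/
noncomputable def ee (S : Fin n → Option (Fin k)) (w : Fin n → Fin k) (i j : Fin n)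
    (zi zj : Fin k) (x : Fin n → Fin k) : ℕ :=
  if x j = w j ∧ x i = zi then 0
  else if x j = w j ∧ rr S w x = 0 then 1
  else if x j = zj then 2 else 3

lemma ee_le (S : Fin n → Option (Fin k)) (w : Fin n → Fin k) (i j : Fin n)
    (zi zj : Fin k) (x : Fin n → Fin k) : ee S w i j zi zj x ≤ 3 := by
  unfold ee; split_ifs <;> omega

lemma rr_upd_fix (S : Fin n → Option (Fin k)) (w x : Fin n → Fin k) {m : Fin n} (c : Fin k)
    (hm : S m ≠ none) : rr S w (Function.update x m c) = rr S w x := by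
  unfold rr
  congr 1
  apply Finset.filter_congr
  intro m' _
  rcases eq_or_ne m' m with rfl | hne
  · simp [hm]
  · rw [Function.update_of_ne hne]

lemma rr_upd_free (S : Fin n → Option (Fin k)) (w x : Fin n → Fin k) {m : Fin n}
    (hm : S m = none) (hx : x m ≠ w m) :
    rr S w (Function.update x m (w m)) + 1 = rr S w x := by
  unfold rr
  have h1 : (Finset.univ.filter fun m' => S m' = none ∧ Function.update x m (w m) m' ≠ w m') =
      (Finset.univ.filter fun m' => S m' = none ∧ x m' ≠ w m').erase m := by
    ext m'
    simp only [Finset.mem_filter, Finset.mem_univ, true_and, Finset.mem_erase]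
    rcases eq_or_ne m' m with rfl | hne
    · simp [Function.update_self]
    · rw [Function.update_of_ne hne]; tauto
  rw [h1, Finset.card_erase_of_mem (Finset.mem_filter.mpr ⟨Finset.mem_univ m, hm, hx⟩)]
  have : 0 < (Finset.univ.filter fun m' => S m' = none ∧ x m' ≠ w m').card :=
    Finset.card_pos.mpr ⟨m, Finset.mem_filter.mpr ⟨Finset.mem_univ m, hm, hx⟩⟩
  omega

lemma rr_eq_zero {S : Fin n → Option (Fin k)} {w x : Fin n → Fin k} :
    rr S w x = 0 ↔ ∀ m, S m = none → x m = w m := by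
  unfold rr
  rw [Finset.card_eq_zero, Finset.filter_eq_empty_iff]
  constructor
  · intro h m hm
    by_contra hc
    exact h (Finset.mem_univ m) ⟨hm, hc⟩
  · rintro h m _ ⟨hm, hc⟩
    exact hc (h m hm)

lemma rr_pos_elim {S : Fin n → Option (Fin k)} {w x : Fin n → Fin k} (h : rr S w x ≠ 0) :
    ∃ m, S m = none ∧ x m ≠ w m := by
  by_contra hc
  push_neg at hc
  exact h (rr_eq_zero.mpr fun m hm => hc m hm)

lemma closure_step (S : Fin n → Option (Fin k)) (w : Fin n → Fin k)
    (i j : Fin n) (hij : i ≠ j) (zi zj : Fin k)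
    (hSi : S i = some zi) (hSj : S j = some zj)
    (hwi : w i ≠ zi) (hwj : w j ≠ zj)
    (hw : ∀ m, m ≠ i → m ≠ j → ∀ a, S m = some a → w m = a) :
    bootClosure (hamming n k) (projSet S ∪ {w}) =
      projSet (Function.update (Function.update S i none) j none) := by
  classical
  set S' := Function.update (Function.update S i none) j none with hS'
  set G := hamming n k
  set C := bootClosure G (projSet S ∪ {w}) with hC
  have hS'j : S' j = none := Function.update_self _ _ _
  have hS'i : S' i = none := by
    rw [hS', Function.update_of_ne hij, Function.update_self]
  have hS'm : ∀ m, m ≠ i → m ≠ j → S' m = S m := by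
    intro m hmi hmj
    rw [hS', Function.update_of_ne hmj, Function.update_of_ne hmi]
  have hfree : ∀ m, S m = none → m ≠ i ∧ m ≠ j := by
    intro m hm
    constructor <;> rintro rfl <;> simp [hSi, hSj] at hm
  -- easy inclusion
  have hsub : C ⊆ projSet S' := by
    apply bootClosure_subset
    · apply Set.union_subset
      · intro x hx m a ha
        have hmi : m ≠ i := by rintro rfl; rw [hS'i] at ha; exact nomatch ha
        have hmj : m ≠ j := by rintro rfl; rw [hS'j] at ha; exact nomatch ha
        exact hx m a ((hS'm m hmi hmj) ▸ ha)
      · rintro x rfl m a ha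
        have hmi : m ≠ i := by rintro rfl; rw [hS'i] at ha; exact nomatch ha
        have hmj : m ≠ j := by rintro rfl; rw [hS'j] at ha; exact nomatch ha
        exact hw m hmi hmj a ((hS'm m hmi hmj) ▸ ha)
    · exact projSet_closed S'
  -- membership helpers
  have memS' : ∀ x ∈ projSet S', ∀ (m : Fin n) (c : Fin k), S' m = none →
      Function.update x m c ∈ projSet S' := by
    intro x hx m c hm m' a ha
    have hne : m' ≠ m := by rintro rfl; rw [hm] at ha; exact nomatch ha
    rw [Function.update_of_ne hne]
    exact hx m' a ha
  have memS : ∀ x, x ∈ projSet S' → x i = zi → x j = zj → x ∈ projSet S := by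
    intro x hx hxi hxj m a ha
    rcases eq_or_ne m i with rfl | hmi
    · rw [hxi]; exact Option.some_inj.mp (hSi.symm.trans ha)
    rcases eq_or_ne m j with rfl | hmj
    · rw [hxj]; exact Option.some_inj.mp (hSj.symm.trans ha)
    · exact hx m a (by rw [hS'm m hmi hmj]; exact ha)
  have eq_off : ∀ x, x ∈ projSet S' → rr S w x = 0 → x j = w j →
      ∀ m, m ≠ i → x m = w m := by
    intro x hx hr hxj m hmi
    rcases eq_or_ne m j with rfl | hmj
    · exact hxj
    cases hSm : S m with
    | none => exact rr_eq_zero.mp hr m hSm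
    | some a =>
      rw [hw m hmi hmj a hSm]
      exact hx m a (by rw [hS'm m hmi hmj]; exact hSm)
  have hbase : projSet S ∪ {w} ⊆ C := subset_bootClosure G _
  have hSine : S i ≠ none := by rw [hSi]; exact Option.some_ne_none zi
  have hSjne : S j ≠ none := by rw [hSj]; exact Option.some_ne_none zj
  have key : ∀ N x, x ∈ projSet S' → 3 * rr S w x + ee S w i j zi zj x = N → x ∈ C := by
    intro N
    induction N using Nat.strong_induction_on with
    | _ N ih =>
    intro x hx hN
    by_cases hxw : x = w
    · exact hbase (Set.mem_union_right _ (by rw [hxw]; rfl))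
    by_cases hxS : x i = zi ∧ x j = zj
    · exact hbase (Set.mem_union_left _ (memS x hx hxS.1 hxS.2))
    by_cases h1 : x j = w j ∧ x i = zi
    · have heN : ee S w i j zi zj x = 0 := by unfold ee; rw [if_pos h1]
      have hp1S : Function.update x j zj ∈ projSet S := by
        apply memS
        · exact memS' x hx j zj hS'j
        · rw [Function.update_of_ne hij]; exact h1.2
        · exact Function.update_self _ _ _
      have hadj1 : G.Adj x (Function.update x j zj) :=
        adj_update (by rw [h1.1]; exact Ne.symm hwj)
      by_cases hr : rr S w x = 0
      · have hwx : w = Function.update x i (w i) := by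
          funext m
          rcases eq_or_ne m i with rfl | hmi
          · rw [Function.update_self]
          · rw [Function.update_of_ne hmi]
            exact (eq_off x hx hr h1.1 m hmi).symm
        have hadj2 : G.Adj x w := by
          rw [hwx]
          exact adj_update (by rw [h1.2]; exact hwi)
        have hne : Function.update x j zj ≠ w := by
          intro hcontr
          exact hwj (by rw [← hcontr, Function.update_self])
        exact mem_closure_of_two G hne hadj1 hadj2
          (hbase (Set.mem_union_left _ hp1S)) (hbase (Set.mem_union_right _ rfl))
      · obtain ⟨m, hm, hxm⟩ := rr_pos_elim hr
        have hmf := hfree m hm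
        set p₂ := Function.update x m (w m) with hp₂
        have hp₂S' : p₂ ∈ projSet S' := memS' x hx m _ (by rw [hS'm m hmf.1 hmf.2]; exact hm)
        have hrr₂ : rr S w p₂ + 1 = rr S w x := rr_upd_free S w x hm hxm
        have hee₂ : ee S w i j zi zj p₂ = 0 := by
          unfold ee
          rw [if_pos ⟨by rw [hp₂, Function.update_of_ne (Ne.symm hmf.2)]; exact h1.1,
            by rw [hp₂, Function.update_of_ne (Ne.symm hmf.1)]; exact h1.2⟩]
        have hp₂C : p₂ ∈ C :=
          ih (3 * rr S w p₂ + ee S w i j zi zj p₂) (by omega) p₂ hp₂S' rfl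
        have hadj2 : G.Adj x p₂ := adj_update (Ne.symm hxm)
        have hne : Function.update x j zj ≠ p₂ := by
          intro hcontr
          have h := congrFun hcontr j
          rw [Function.update_self, hp₂, Function.update_of_ne (Ne.symm hmf.2), h1.1] at h
          exact hwj h.symm
        exact mem_closure_of_two G hne hadj1 hadj2 (hbase (Set.mem_union_left _ hp1S)) hp₂C
    by_cases h2 : x j = w j ∧ rr S w x = 0
    · have hxi_ne : x i ≠ zi := fun hc => h1 ⟨h2.1, hc⟩
      have heN : ee S w i j zi zj x = 1 := by unfold ee; rw [if_neg h1, if_pos h2]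
      have hxiw : x i ≠ w i := by
        intro hc
        apply hxw
        funext m
        rcases eq_or_ne m i with rfl | hmi
        · exact hc
        · exact eq_off x hx h2.2 h2.1 m hmi
      have hwx : w = Function.update x i (w i) := by
        funext m
        rcases eq_or_ne m i with rfl | hmi
        · rw [Function.update_self]
        · rw [Function.update_of_ne hmi]
          exact (eq_off x hx h2.2 h2.1 m hmi).symm
      have hadj1 : G.Adj x w := by
        rw [hwx]; exact adj_update (Ne.symm hxiw)
      set p₂ := Function.update x i zi with hp₂
      have hp₂S' : p₂ ∈ projSet S' := memS' x hx i zi hS'i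
      have hrr₂ : rr S w p₂ = rr S w x := rr_upd_fix S w x zi hSine
      have hee₂ : ee S w i j zi zj p₂ = 0 := by
        unfold ee
        rw [if_pos ⟨by rw [hp₂, Function.update_of_ne (Ne.symm hij)]; exact h2.1,
          by rw [hp₂, Function.update_self]⟩]
      have hp₂C : p₂ ∈ C :=
        ih (3 * rr S w p₂ + ee S w i j zi zj p₂) (by omega) p₂ hp₂S' rfl
      have hadj2 : G.Adj x p₂ := adj_update (Ne.symm hxi_ne)
      have hne : w ≠ p₂ := by
        intro hcontr
        have h := congrFun hcontr i
        rw [hp₂, Function.update_self] at h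
        exact hwi h
      exact mem_closure_of_two G hne hadj1 hadj2 (hbase (Set.mem_union_right _ rfl)) hp₂C
    by_cases h3 : x j = zj
    · have hxi_ne : x i ≠ zi := fun hc => hxS ⟨hc, h3⟩
      have heN : ee S w i j zi zj x = 2 := by unfold ee; rw [if_neg h1, if_neg h2, if_pos h3]
      have hp1S : Function.update x i zi ∈ projSet S := by
        apply memS
        · exact memS' x hx i zi hS'i
        · exact Function.update_self _ _ _
        · rw [Function.update_of_ne (Ne.symm hij)]; exact h3
      have hadj1 : G.Adj x (Function.update x i zi) := adj_update (Ne.symm hxi_ne)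
      by_cases hr : rr S w x = 0
      · set p₂ := Function.update x j (w j) with hp₂
        have hp₂S' : p₂ ∈ projSet S' := memS' x hx j _ hS'j
        have hrr₂ : rr S w p₂ = rr S w x := rr_upd_fix S w x (w j) hSjne
        have hee₂ : ee S w i j zi zj p₂ = 1 := by
          unfold ee
          rw [if_neg, if_pos ⟨by rw [hp₂, Function.update_self], by rw [hrr₂]; exact hr⟩]
          rintro ⟨-, hc⟩
          rw [hp₂, Function.update_of_ne hij] at hc
          exact hxi_ne hc
        have hp₂C : p₂ ∈ C :=
          ih (3 * rr S w p₂ + ee S w i j zi zj p₂) (by omega) p₂ hp₂S' rfl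
        have hadj2 : G.Adj x p₂ := adj_update (by rw [h3]; exact hwj)
        have hne : Function.update x i zi ≠ p₂ := by
          intro hcontr
          have h := congrFun hcontr j
          rw [hp₂, Function.update_self, Function.update_of_ne (Ne.symm hij), h3] at h
          exact hwj h.symm
        exact mem_closure_of_two G hne hadj1 hadj2 (hbase (Set.mem_union_left _ hp1S)) hp₂C
      · obtain ⟨m, hm, hxm⟩ := rr_pos_elim hr
        have hmf := hfree m hm
        set p₂ := Function.update x m (w m) with hp₂
        have hp₂S' : p₂ ∈ projSet S' := memS' x hx m _ (by rw [hS'm m hmf.1 hmf.2]; exact hm)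
        have hrr₂ : rr S w p₂ + 1 = rr S w x := rr_upd_free S w x hm hxm
        have hp₂j : p₂ j = x j := by rw [hp₂, Function.update_of_ne (Ne.symm hmf.2)]
        have hee₂ : ee S w i j zi zj p₂ = 2 := by
          unfold ee
          rw [if_neg, if_neg, if_pos (by rw [hp₂j]; exact h3)]
          · rintro ⟨hc, -⟩
            rw [hp₂j, h3] at hc
            exact hwj hc.symm
          · rintro ⟨hc, -⟩
            rw [hp₂j, h3] at hc
            exact hwj hc.symm
        have hp₂C : p₂ ∈ C :=
          ih (3 * rr S w p₂ + ee S w i j zi zj p₂) (by omega) p₂ hp₂S' rfl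
        have hadj2 : G.Adj x p₂ := adj_update (Ne.symm hxm)
        have hne : Function.update x i zi ≠ p₂ := by
          intro hcontr
          have h := congrFun hcontr i
          rw [hp₂, Function.update_self, Function.update_of_ne (Ne.symm hmf.1)] at h
          exact hxi_ne h.symm
        exact mem_closure_of_two G hne hadj1 hadj2 (hbase (Set.mem_union_left _ hp1S)) hp₂C
    · have heN : ee S w i j zi zj x = 3 := by unfold ee; rw [if_neg h1, if_neg h2, if_neg h3]
      set p₁ := Function.update x j zj with hp₁
      have hp₁S' : p₁ ∈ projSet S' := memS' x hx j zj hS'j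
      have hrr₁ : rr S w p₁ = rr S w x := rr_upd_fix S w x zj hSjne
      have hp₁j : p₁ j = zj := by rw [hp₁, Function.update_self]
      have hee₁ : ee S w i j zi zj p₁ = 2 := by
        unfold ee
        rw [if_neg, if_neg, if_pos hp₁j]
        · rintro ⟨hc, -⟩
          rw [hp₁j] at hc
          exact hwj hc.symm
        · rintro ⟨hc, -⟩
          rw [hp₁j] at hc
          exact hwj hc.symm
      have hp₁C : p₁ ∈ C :=
        ih (3 * rr S w p₁ + ee S w i j zi zj p₁) (by omega) p₁ hp₁S' rfl
      have hadj1 : G.Adj x p₁ := adj_update (Ne.symm h3)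
      by_cases hr : rr S w x = 0
      · have hxjw : x j ≠ w j := fun hc => h2 ⟨hc, hr⟩
        set p₂ := Function.update x j (w j) with hp₂
        have hp₂S' : p₂ ∈ projSet S' := memS' x hx j _ hS'j
        have hrr₂ : rr S w p₂ = rr S w x := rr_upd_fix S w x (w j) hSjne
        have hp₂j : p₂ j = w j := by rw [hp₂, Function.update_self]
        have hee₂ : ee S w i j zi zj p₂ ≤ 1 := by
          unfold ee
          split_ifs with hA hB hC
          · omega
          · omega
          · exact absurd ⟨hp₂j, by rw [hrr₂]; exact hr⟩ hB
          · exact absurd ⟨hp₂j, by rw [hrr₂]; exact hr⟩ hB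
        have hp₂C : p₂ ∈ C :=
          ih (3 * rr S w p₂ + ee S w i j zi zj p₂) (by omega) p₂ hp₂S' rfl
        have hadj2 : G.Adj x p₂ := adj_update (Ne.symm hxjw)
        have hne : p₁ ≠ p₂ := by
          intro hcontr
          have h := congrFun hcontr j
          rw [hp₁j] at h
          rw [hp₂j] at h
          exact hwj h.symm
        exact mem_closure_of_two G hne hadj1 hadj2 hp₁C hp₂C
      · obtain ⟨m, hm, hxm⟩ := rr_pos_elim hr
        have hmf := hfree m hm
        set p₂ := Function.update x m (w m) with hp₂
        have hp₂S' : p₂ ∈ projSet S' := memS' x hx m _ (by rw [hS'm m hmf.1 hmf.2]; exact hm)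
        have hrr₂ : rr S w p₂ + 1 = rr S w x := rr_upd_free S w x hm hxm
        have hee₂ : ee S w i j zi zj p₂ ≤ 3 := ee_le S w i j zi zj p₂
        have hp₂C : p₂ ∈ C :=
          ih (3 * rr S w p₂ + ee S w i j zi zj p₂) (by omega) p₂ hp₂S' rfl
        have hadj2 : G.Adj x p₂ := adj_update (Ne.symm hxm)
        have hne : p₁ ≠ p₂ := by
          intro hcontr
          have h := congrFun hcontr j
          rw [hp₁j, hp₂, Function.update_of_ne (Ne.symm hmf.2)] at h
          exact h3 h.symm
        exact mem_closure_of_two G hne hadj1 hadj2 hp₁C hp₂C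
  apply le_antisymm hsub
  intro x hx
  exact key _ x hx rfl

end Spread

section Structure

variable {n k : ℕ}

lemma projDim_update_two {S : Fin n → Option (Fin k)} {a b : Fin n} (hab : a ≠ b)
    {za zb : Fin k} (hSa : S a = some za) (hSb : S b = some zb) :
    projDim (Function.update (Function.update S a none) b none) = projDim S + 2 := by
  classical
  unfold projDim
  have hset : (Finset.univ.filter fun t =>
      Function.update (Function.update S a none) b none t = none)
      = insert b (insert a (Finset.univ.filter fun t => S t = none)) := by
    ext t
    simp only [Finset.mem_filter, Finset.mem_univ, true_and, Finset.mem_insert]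
    rcases eq_or_ne t b with rfl | htb
    · simp [Function.update_self]
    rcases eq_or_ne t a with rfl | hta
    · simp [Function.update_of_ne hab, Function.update_self, htb, hSa]
    · simp [Function.update_of_ne htb, Function.update_of_ne hta, htb, hta]
  rw [hset, Finset.card_insert_of_notMem, Finset.card_insert_of_notMem]
  · intro hmem
    rw [Finset.mem_filter] at hmem
    rw [hSa] at hmem
    exact nomatch hmem.2
  · intro hmem
    rcases Finset.mem_insert.mp hmem with h | h
    · exact hab h.symm
    · rw [Finset.mem_filter, hSb] at h
      exact nomatch h.2

lemma closure_structure {m : ℕ} (v : Fin m → (Fin n → Fin k))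
    (hv : SeqSpanSeq (hamming n k) m v) :
    ∀ i : ℕ, 1 ≤ i → i ≤ m → ∃ S : Fin n → Option (Fin k),
      bootClosure (hamming n k) (v '' {j | (j : ℕ) < i}) = projSet S ∧
      projDim S = 2 * (i - 1) := by
  intro i
  induction i with
  | zero => intro h1 _; omega
  | succ i ih =>
    intro _ h2
    rcases Nat.eq_zero_or_pos i with rfl | h1i
    · have h0m : 0 < m := by omega
      refine ⟨fun t => some (v ⟨0, h0m⟩ t), ?_, ?_⟩
      · have himg : v '' {j | (j : ℕ) < 1} = {v ⟨0, h0m⟩} := by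
          ext y
          simp only [Set.mem_image, Set.mem_setOf_eq, Set.mem_singleton_iff]
          constructor
          · rintro ⟨jj, hjj, rfl⟩
            have hje : jj = ⟨0, h0m⟩ := by
              apply Fin.ext
              show (jj : ℕ) = 0
              have hjj' : (jj : ℕ) < 1 := hjj
              omega
            rw [hje]
          · rintro rfl
            exact ⟨⟨0, h0m⟩, by simp, rfl⟩
        rw [himg, bootClosure_singleton, singleton_eq_projSet]
      · simp [projDim_allsome]
    · have him : i ≤ m := by omega
      have hilt : i < m := by omega
      obtain ⟨S, hS, hdim⟩ := ih h1i him
      set w := v ⟨i, hilt⟩ with hwdef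
      have hdist := hv ⟨i, hilt⟩ h1i
      rw [show ((⟨i, hilt⟩ : Fin m) : ℕ) = i from rfl] at hdist
      rw [hS, setDist_projSet] at hdist
      obtain ⟨a, b, hab, hwr⟩ := Finset.card_eq_two.mp hdist
      have hwa : a ∈ wrongs S w := by rw [hwr]; simp
      have hwb : b ∈ wrongs S w := by rw [hwr]; simp
      obtain ⟨za, hSa, hwza⟩ := mem_wrongs.mp hwa
      obtain ⟨zb, hSb, hwzb⟩ := mem_wrongs.mp hwb
      have hcorrect : ∀ t, t ≠ a → t ≠ b → ∀ c, S t = some c → w t = c := by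
        intro t hta htb c hc
        by_contra hne
        have ht : t ∈ wrongs S w := mem_wrongs.mpr ⟨c, hc, hne⟩
        rw [hwr, Finset.mem_insert, Finset.mem_singleton] at ht
        tauto
      refine ⟨Function.update (Function.update S a none) b none, ?_, ?_⟩
      · have himg : v '' {j | (j : ℕ) < i + 1} = (v '' {j | (j : ℕ) < i}) ∪ {w} := by
          ext y
          simp only [Set.mem_image, Set.mem_setOf_eq, Set.mem_union, Set.mem_singleton_iff]
          constructor
          · rintro ⟨jj, hjj, rfl⟩
            rcases Nat.lt_or_ge (jj : ℕ) i with hji | hji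
            · exact Or.inl ⟨jj, hji, rfl⟩
            · right
              rw [hwdef]
              have hje : jj = ⟨i, hilt⟩ := by
                apply Fin.ext
                show (jj : ℕ) = i
                omega
              rw [hje]
          · rintro (⟨jj, hjj, rfl⟩ | rfl)
            · exact ⟨jj, by omega, rfl⟩
            · exact ⟨⟨i, hilt⟩, by simp, rfl⟩
        rw [himg, ← bootClosure_union_closure, hS]
        exact closure_step S w a b hab za zb hSa hSb hwza hwzb hcorrect
      · rw [projDim_update_two hab hSa hSb, hdim]
        omega

end Structure

section Count

variable {n k : ℕ}

lemma count_wrongs_two (S : Fin n → Option (Fin k)) :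
    Nat.card {w : Fin n → Fin k // (wrongs S w).card = 2} =
      (n - projDim S).choose 2 * (k - 1) ^ 2 * k ^ projDim S := by
  classical
  rw [Nat.card_eq_fintype_card, Fintype.card_subtype]
  set F : Finset (Fin n) := Finset.univ.filter (fun t => S t ≠ none) with hF
  have hmaps : ∀ w ∈ Finset.univ.filter (fun w : Fin n → Fin k => (wrongs S w).card = 2),
      wrongs S w ∈ F.powersetCard 2 := by
    intro w hw
    rw [Finset.mem_powersetCard]
    refine ⟨?_, (Finset.mem_filter.mp hw).2⟩
    intro t ht
    obtain ⟨a, ha, _⟩ := mem_wrongs.mp ht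
    exact Finset.mem_filter.mpr ⟨Finset.mem_univ t,
      by rw [ha]; exact Option.some_ne_none a⟩
  rw [Finset.card_eq_sum_card_fiberwise hmaps]
  have hfiber : ∀ E ∈ F.powersetCard 2,
      ((Finset.univ.filter (fun w : Fin n → Fin k => (wrongs S w).card = 2)).filter
        (fun w => wrongs S w = E)).card = (k - 1) ^ 2 * k ^ projDim S := by
    intro E hE
    rw [Finset.mem_powersetCard] at hE
    have hfe : ((Finset.univ.filter (fun w : Fin n → Fin k => (wrongs S w).card = 2)).filter
        (fun w => wrongs S w = E)) =
        Fintype.piFinset (fun t => (S t).elim Finset.univ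
          (fun a => if t ∈ E then Finset.univ.erase a else {a})) := by
      ext w
      simp only [Finset.mem_filter, Finset.mem_univ, true_and, Fintype.mem_piFinset]
      constructor
      · rintro ⟨hw2, hwE⟩ t
        cases hS : S t with
        | none => simp
        | some a =>
          simp only [Option.elim]
          by_cases htE : t ∈ E
          · rw [if_pos htE]
            have htw : t ∈ wrongs S w := by rw [hwE]; exact htE
            obtain ⟨a', ha', hna⟩ := mem_wrongs.mp htw
            rw [hS] at ha'
            obtain rfl := Option.some_inj.mp ha'
            exact Finset.mem_erase.mpr ⟨hna, Finset.mem_univ _⟩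
          · rw [if_neg htE, Finset.mem_singleton]
            by_contra hne
            exact htE (by rw [← hwE]; exact mem_wrongs.mpr ⟨a, hS, hne⟩)
      · intro hall
        have hwE : wrongs S w = E := by
          ext t
          rw [mem_wrongs]
          constructor
          · rintro ⟨a, ha, hna⟩
            have ht := hall t
            rw [ha] at ht
            simp only [Option.elim] at ht
            by_contra htE
            rw [if_neg htE, Finset.mem_singleton] at ht
            exact hna ht
          · intro htE
            have htF := hE.1 htE
            rw [hF, Finset.mem_filter] at htF
            obtain ⟨a, ha⟩ := Option.ne_none_iff_exists'.mp htF.2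
            refine ⟨a, ha, ?_⟩
            have ht := hall t
            rw [ha] at ht
            simp only [Option.elim] at ht
            rw [if_pos htE] at ht
            exact (Finset.mem_erase.mp ht).1
        exact ⟨by rw [hwE]; exact hE.2, hwE⟩
    rw [hfe, Fintype.card_piFinset]
    have hterm : ∀ t, ((S t).elim Finset.univ
        (fun a => if t ∈ E then Finset.univ.erase a else ({a} : Finset (Fin k)))).card
        = if t ∈ E then k - 1 else if S t = none then k else 1 := by
      intro t
      cases hS : S t with
      | none =>
        have htE : t ∉ E := by
          intro h
          have := hE.1 h
          rw [hF, Finset.mem_filter] at this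
          exact this.2 hS
        simp [htE]
      | some a =>
        by_cases htE : t ∈ E
        · simp only [Option.elim, if_pos htE]
          rw [Finset.card_erase_of_mem (Finset.mem_univ a), Finset.card_univ, Fintype.card_fin]
        · simp [htE]
    rw [Finset.prod_congr rfl (fun t _ => hterm t)]
    rw [← Finset.prod_sdiff (Finset.subset_univ E)]
    have h1 : ∏ t ∈ E, (if t ∈ E then k - 1 else if S t = none then k else 1) = (k - 1) ^ 2 := by
      rw [Finset.prod_congr rfl (fun t ht => if_pos ht), Finset.prod_const, hE.2]
    have h2 : ∏ t ∈ Finset.univ \ E, (if t ∈ E then k - 1 else if S t = none then k else 1)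
        = k ^ projDim S := by
      have hcongr : ∀ t ∈ Finset.univ \ E,
          (if t ∈ E then k - 1 else if S t = none then k else 1)
          = if S t = none then k else 1 := by
        intro t ht
        rw [if_neg (Finset.mem_sdiff.mp ht).2]
      rw [Finset.prod_congr rfl hcongr]
      set A := (Finset.univ \ E).filter (fun t => S t = none) with hA
      have hAsub : A ⊆ Finset.univ \ E := Finset.filter_subset _ _
      rw [← Finset.prod_sdiff hAsub]
      have h3 : ∏ t ∈ A, (if S t = none then k else 1) = k ^ projDim S := by
        have : ∀ t ∈ A, (if S t = none then k else 1) = k := by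
          intro t ht
          rw [if_pos (Finset.mem_filter.mp ht).2]
        rw [Finset.prod_congr rfl this, Finset.prod_const]
        congr 1
        rw [hA]
        unfold projDim
        congr 1
        ext t
        simp only [Finset.mem_filter, Finset.mem_sdiff, Finset.mem_univ, true_and]
        constructor
        · tauto
        · intro ht
          refine ⟨?_, ht⟩
          intro htE
          have := hE.1 htE
          rw [hF, Finset.mem_filter] at this
          exact this.2 ht
      have h4 : ∏ t ∈ (Finset.univ \ E) \ A, (if S t = none then k else 1) = 1 := by
        apply Finset.prod_eq_one
        intro t ht
        rw [Finset.mem_sdiff] at ht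
        rw [if_neg]
        intro hnone
        exact ht.2 (Finset.mem_filter.mpr ⟨ht.1, hnone⟩)
      rw [h3, h4, one_mul]
    rw [h1, h2]
    ring
  rw [Finset.sum_congr rfl hfiber, Finset.sum_const, Finset.card_powersetCard, smul_eq_mul]
  have hcardF : F.card = n - projDim S := by
    have := Finset.card_filter_add_card_filter_not
      (s := (Finset.univ : Finset (Fin n))) (p := fun t => S t = none)
    unfold projDim
    have hcompl : Finset.univ.filter (fun t => ¬ S t = none) = F := rfl
    rw [hcompl] at this
    have hcu : (Finset.univ : Finset (Fin n)).card = n := by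
      rw [Finset.card_univ, Fintype.card_fin]
    omega
  rw [hcardF]
  ring

end Count

section Seq

variable {n k : ℕ}

lemma image_lt_snoc {m : ℕ} (v : Fin m → (Fin n → Fin k)) (w : Fin n → Fin k)
    {c : ℕ} (hc : c ≤ m) :
    (Fin.snoc v w) '' {j : Fin (m+1) | (j : ℕ) < c} = v '' {j : Fin m | (j : ℕ) < c} := by
  ext y
  simp only [Set.mem_image, Set.mem_setOf_eq]
  constructor
  · rintro ⟨jj, hjj, rfl⟩
    have hjm : (jj : ℕ) < m := lt_of_lt_of_le hjj hc
    have hcast : Fin.castSucc (⟨(jj : ℕ), hjm⟩ : Fin m) = jj := Fin.ext rfl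
    have hval : (Fin.snoc v w : Fin (m+1) → Fin n → Fin k) jj = v ⟨(jj : ℕ), hjm⟩ := by
      conv_lhs => rw [← hcast]
      exact Fin.snoc_castSucc ..
    exact ⟨⟨(jj : ℕ), hjm⟩, hjj, hval.symm⟩
  · rintro ⟨jj, hjj, rfl⟩
    exact ⟨Fin.castSucc jj, by simpa using hjj, Fin.snoc_castSucc ..⟩

lemma snoc_seq_iff {m : ℕ} (hm : 1 ≤ m) (v : Fin m → (Fin n → Fin k))
    (hv : SeqSpanSeq (hamming n k) m v) (w : Fin n → Fin k) :
    SeqSpanSeq (hamming n k) (m+1) (Fin.snoc v w) ↔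
      setDist (hamming n k)
        (bootClosure (hamming n k) (v '' {j : Fin m | (j : ℕ) < m})) {w} = 2 := by
  constructor
  · intro h
    have hlast := h (Fin.last m) (by simp [Fin.last]; omega)
    have hcoe : ((Fin.last m : Fin (m+1)) : ℕ) = m := rfl
    rw [hcoe] at hlast
    rw [image_lt_snoc v w le_rfl] at hlast
    rwa [Fin.snoc_last] at hlast
  · intro h i hi
    by_cases him : (i : ℕ) < m
    · have h2 := hv ⟨(i : ℕ), him⟩ hi
      have hcast : Fin.castSucc (⟨(i : ℕ), him⟩ : Fin m) = i := Fin.ext rfl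
      have hsn : (Fin.snoc v w : Fin (m+1) → Fin n → Fin k) i = v ⟨(i : ℕ), him⟩ := by
        conv_lhs => rw [← hcast]
        exact Fin.snoc_castSucc ..
      rw [image_lt_snoc v w (le_of_lt him), hsn]
      exact h2
    · have hieq : (i : ℕ) = m := by
        have := i.isLt
        omega
      have hieq' : i = Fin.last m := Fin.ext hieq
      rw [hieq']
      have hcoe : ((Fin.last m : Fin (m+1)) : ℕ) = m := rfl
      rw [hcoe, image_lt_snoc v w le_rfl, Fin.snoc_last]
      exact h

lemma seq_init {m : ℕ} (u : Fin (m+1) → (Fin n → Fin k))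
    (hu : SeqSpanSeq (hamming n k) (m+1) u) : SeqSpanSeq (hamming n k) m (Fin.init u) := by
  intro i hi
  have h := hu (Fin.castSucc i) (by simpa using hi)
  have himg : Fin.init u '' {j : Fin m | (j : ℕ) < (i : ℕ)}
      = u '' {j : Fin (m+1) | (j : ℕ) < (i : ℕ)} := by
    have h2 := image_lt_snoc (Fin.init u) (u (Fin.last m)) (c := (i : ℕ)) (le_of_lt i.isLt)
    rw [Fin.snoc_init_self] at h2
    exact h2.symm
  rw [himg]
  have hval : Fin.init u i = u (Fin.castSucc i) := rfl
  rw [hval]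
  exact h

lemma seqCount_one : seqCount n k 1 = k ^ n := by
  classical
  unfold seqCount
  have hall : ∀ v : Fin 1 → (Fin n → Fin k), SeqSpanSeq (hamming n k) 1 v := by
    intro v i hi
    have := i.isLt
    omega
  rw [Nat.card_eq_fintype_card, Fintype.card_subtype,
    Finset.filter_true_of_mem (fun v _ => hall v), Finset.card_univ]
  simp [Fintype.card_fun, Fintype.card_fin]

lemma seqCount_succ (m : ℕ) (C : ℕ)
    (hC : ∀ v : Fin m → (Fin n → Fin k), SeqSpanSeq (hamming n k) m v →
      Nat.card {w : Fin n → Fin k // SeqSpanSeq (hamming n k) (m+1) (Fin.snoc v w)} = C) :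
    seqCount n k (m+1) = seqCount n k m * C := by
  classical
  unfold seqCount
  rw [Nat.card_eq_fintype_card, Nat.card_eq_fintype_card, Fintype.card_subtype,
    Fintype.card_subtype]
  have hmaps : ∀ u ∈ Finset.univ.filter (fun u : Fin (m+1) → (Fin n → Fin k) =>
      SeqSpanSeq (hamming n k) (m+1) u), Fin.init u ∈ Finset.univ.filter (fun v =>
      SeqSpanSeq (hamming n k) m v) := fun u hu =>
    Finset.mem_filter.mpr ⟨Finset.mem_univ _, seq_init u (Finset.mem_filter.mp hu).2⟩
  rw [Finset.card_eq_sum_card_fiberwise hmaps]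
  have hfib : ∀ v ∈ Finset.univ.filter (fun v : Fin m → (Fin n → Fin k) =>
      SeqSpanSeq (hamming n k) m v),
      ((Finset.univ.filter (fun u : Fin (m+1) → (Fin n → Fin k) =>
        SeqSpanSeq (hamming n k) (m+1) u)).filter (fun u => Fin.init u = v)).card = C := by
    intro v hv
    have hvS := (Finset.mem_filter.mp hv).2
    rw [← hC v hvS, Nat.card_eq_fintype_card, Fintype.card_subtype]
    refine Finset.card_bij' (fun u _ => u (Fin.last m)) (fun w _ => Fin.snoc v w)
        ?_ ?_ ?_ ?_ <;>
      intro x hx <;>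
      simp only [Finset.mem_filter, Finset.mem_univ, true_and] at hx ⊢ <;>
      first
        | (rw [← hx.2, Fin.snoc_init_self]; exact hx.1)
        | (exact ⟨hx, by simp⟩)
        | (rw [← hx.2, Fin.snoc_init_self])
        | simp
  rw [Finset.sum_congr rfl hfib, Finset.sum_const, smul_eq_mul]

lemma fiber_count (ℓ : ℕ) (hℓ1 : 1 ≤ ℓ) (hℓn : 2 * ℓ ≤ n)
    (v : Fin ℓ → (Fin n → Fin k)) (hv : SeqSpanSeq (hamming n k) ℓ v) :
    Nat.card {w : Fin n → Fin k // SeqSpanSeq (hamming n k) (ℓ+1) (Fin.snoc v w)} =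
      (n - 2 * ℓ + 2).choose 2 * (k - 1) ^ 2 * k ^ (2 * ℓ - 2) := by
  obtain ⟨S, hS, hdim⟩ := closure_structure v hv ℓ hℓ1 le_rfl
  have hiff : ∀ w : Fin n → Fin k,
      SeqSpanSeq (hamming n k) (ℓ+1) (Fin.snoc v w) ↔ (wrongs S w).card = 2 := by
    intro w
    rw [snoc_seq_iff hℓ1 v hv w, hS, setDist_projSet]
  have hcongr : Nat.card {w : Fin n → Fin k //
      SeqSpanSeq (hamming n k) (ℓ+1) (Fin.snoc v w)}
      = Nat.card {w : Fin n → Fin k // (wrongs S w).card = 2} :=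
    Nat.card_congr (Equiv.subtypeEquivRight hiff)
  rw [hcongr, count_wrongs_two S, hdim]
  have h1 : n - 2 * (ℓ - 1) = n - 2 * ℓ + 2 := by omega
  have h2 : 2 * (ℓ - 1) = 2 * ℓ - 2 := by omega
  rw [h1, h2]

end Seq

section Final

lemma part2 (n k : ℕ) (hk : 1 ≤ k) : ∀ ℓ : ℕ, 2 * ℓ ≤ n →
    (seqCount n k (ℓ + 1) : ℝ) =
        (k : ℝ) ^ n * ∏ j ∈ Finset.Icc 1 ℓ,
          ((Nat.choose (n - 2 * j + 2) 2 : ℝ) * ((k : ℝ) - 1) ^ 2 * (k : ℝ) ^ (2 * j - 2)) := by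
  intro ℓ
  induction ℓ with
  | zero =>
    intro _
    simp [seqCount_one]
  | succ ℓ ih =>
    intro h
    have h2 : 2 * ℓ ≤ n := by omega
    have hrec : seqCount n k (ℓ + 1 + 1) = seqCount n k (ℓ + 1) *
        ((n - 2 * (ℓ + 1) + 2).choose 2 * (k - 1) ^ 2 * k ^ (2 * (ℓ + 1) - 2)) :=
      seqCount_succ (ℓ + 1) _ (fun v hv => fiber_count (ℓ + 1) (by omega) h v hv)
    rw [hrec, Nat.cast_mul, ih h2,
      Finset.prod_Icc_succ_top (by omega : 1 ≤ ℓ + 1)]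
    push_cast [Nat.cast_sub hk]
    ring

lemma prod_formula (n k : ℕ) (hk : 1 ≤ k) : ∀ ℓ : ℕ, 2 * ℓ ≤ n →
    (k : ℝ) ^ n * ∏ j ∈ Finset.Icc 1 ℓ,
          ((Nat.choose (n - 2 * j + 2) 2 : ℝ) * ((k : ℝ) - 1) ^ 2 * (k : ℝ) ^ (2 * j - 2)) =
      (Nat.factorial n : ℝ) / (Nat.factorial (n - 2 * ℓ) : ℝ) * ((k : ℝ) - 1) ^ (2 * ℓ) *
          (2 : ℝ) ^ (-(ℓ : ℝ)) * (k : ℝ) ^ (n + ℓ ^ 2 - ℓ) := by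
  intro ℓ
  induction ℓ with
  | zero =>
    intro _
    simp only [Nat.mul_zero, Nat.sub_zero, Finset.Icc_eq_empty (by omega : ¬ (1:ℕ) ≤ 0),
      Finset.prod_empty, mul_one, pow_zero, Nat.cast_zero, neg_zero, Real.rpow_zero]
    rw [div_self (by positivity : ((Nat.factorial n : ℝ)) ≠ 0)]
    norm_num
  | succ ℓ ih =>
    intro h
    have h2 : 2 * ℓ ≤ n := by omega
    set a := n - 2 * ℓ with ha
    have ha2 : 2 ≤ a := by omega
    have hfa : a.factorial = a * (a - 1) * (a - 2).factorial := by
      calc a.factorial = ((a - 2) + 2).factorial := by rw [show (a - 2) + 2 = a by omega]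
      _ = ((a - 2) + 2) * (((a - 2) + 1)).factorial := Nat.factorial_succ _
      _ = ((a - 2) + 2) * (((a - 2) + 1) * (a - 2).factorial) := by rw [Nat.factorial_succ]
      _ = a * (a - 1) * (a - 2).factorial := by
            rw [show (a - 2) + 2 = a by omega, show (a - 2) + 1 = a - 1 by omega]
            ring
    have hA : (a.factorial : ℝ) = (a : ℝ) * ((a : ℝ) - 1) * ((a - 2).factorial : ℝ) := by
      rw [hfa]
      push_cast [Nat.cast_sub (show 1 ≤ a by omega)]
      ring
    have hsq : ℓ ≤ ℓ ^ 2 := Nat.le_self_pow (by norm_num) ℓ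
    have hsq1 : (ℓ + 1) ^ 2 = ℓ ^ 2 + 2 * ℓ + 1 := by ring
    have hexpk : (k : ℝ) ^ (n + (ℓ + 1) ^ 2 - (ℓ + 1)) =
        (k : ℝ) ^ (n + ℓ ^ 2 - ℓ) * (k : ℝ) ^ (2 * ℓ) := by
      rw [← pow_add, hsq1,
        show n + (ℓ ^ 2 + 2 * ℓ + 1) - (ℓ + 1) = n + ℓ ^ 2 - ℓ + 2 * ℓ by omega]
    have hexp2 : (2 : ℝ) ^ (-((ℓ : ℝ) + 1)) = (2 : ℝ) ^ (-(ℓ : ℝ)) * (2 : ℝ)⁻¹ := by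
      rw [show -((ℓ : ℝ) + 1) = -(ℓ : ℝ) + (-1) by ring,
        Real.rpow_add (by norm_num : (0 : ℝ) < 2), Real.rpow_neg_one]
    have hkm1 : ((k : ℝ) - 1) ^ (2 * (ℓ + 1)) = ((k : ℝ) - 1) ^ (2 * ℓ) * ((k : ℝ) - 1) ^ 2 := by
      rw [show 2 * (ℓ + 1) = 2 * ℓ + 2 by ring, pow_add]
    rw [Finset.prod_Icc_succ_top (by omega : 1 ≤ ℓ + 1), ← mul_assoc, ih h2]
    rw [show n - 2 * (ℓ + 1) + 2 = a by omega, show n - 2 * (ℓ + 1) = a - 2 by omega]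
    rw [Nat.cast_choose_two ℝ a, show 2 * (ℓ + 1) - 2 = 2 * ℓ by omega]
    rw [Nat.cast_succ, hexpk, hexp2, hkm1, hA]
    have hane : ((a - 2).factorial : ℝ) ≠ 0 := by positivity
    have haR : (2 : ℝ) ≤ (a : ℝ) := by exact_mod_cast ha2
    have h0 : (a : ℝ) ≠ 0 := by linarith
    have h1 : (a : ℝ) - 1 ≠ 0 := by
      intro hcc
      linarith
    field_simp

lemma part3 (n k : ℕ) (hk : 1 ≤ k) (ℓ : ℕ) (h : 2 * ℓ ≤ n) :
    (seqCount n k (ℓ + 1) : ℝ) =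
      (Nat.factorial n : ℝ) / (Nat.factorial (n - 2 * ℓ) : ℝ) * ((k : ℝ) - 1) ^ (2 * ℓ) *
          (2 : ℝ) ^ (-(ℓ : ℝ)) * (k : ℝ) ^ (n + ℓ ^ 2 - ℓ) :=
  (part2 n k hk ℓ h).trans (prod_formula n k hk ℓ h)

end Final

end SS15

theorem stmt15 (n k : ℕ) (hk : 2 ≤ k) (ℓ : ℕ) (hℓ : ℓ ≤ n / 2) :
    (1 ≤ ℓ → ∀ v : Fin ℓ → (Fin n → Fin k), SeqSpanSeq (hamming n k) ℓ v →
      Nat.card {w : Fin n → Fin k //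
          SeqSpanSeq (hamming n k) (ℓ + 1) (Fin.snoc v w)} =
        Nat.choose (n - 2 * ℓ + 2) 2 * (k - 1) ^ 2 * k ^ (2 * ℓ - 2)) ∧
    (seqCount n k (ℓ + 1) : ℝ) =
        (k : ℝ) ^ n * ∏ j ∈ Finset.Icc 1 ℓ,
          ((Nat.choose (n - 2 * j + 2) 2 : ℝ) * ((k : ℝ) - 1) ^ 2 * (k : ℝ) ^ (2 * j - 2)) ∧
    (seqCount n k (ℓ + 1) : ℝ) =
        (Nat.factorial n : ℝ) / (Nat.factorial (n - 2 * ℓ) : ℝ) * ((k : ℝ) - 1) ^ (2 * ℓ) *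
          (2 : ℝ) ^ (-(ℓ : ℝ)) * (k : ℝ) ^ (n + ℓ ^ 2 - ℓ) := by
  have h2n : 2 * ℓ ≤ n := by omega
  have hk1 : 1 ≤ k := by omega
  exact ⟨fun h1 v hv => SS15.fiber_count ℓ h1 h2n v hv, SS15.part2 n k hk1 ℓ h2n,
    SS15.part3 n k hk1 ℓ h2n⟩
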